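/- Let R = k[x,y,z], and let I_t be a grade 3 homogeneous compressed Gorenstein ideal of socle degree 2s−1 (s ≥ 3), minimally generated by φ_1,…,φ_{s+1} of degree s and ψ_1,…,ψ_b of degree s+1. Then for any 1 ≤ ℓ ≤ s+1, the ideal J = (φ_1,…,φ_{s+1−ℓ}, ψ_1,…,ψ_b) + R_+ φ_{s+2−ℓ} + ⋯ + R_+ φ_{s+1} defines a ring of Cohen–Macaulay type ℓ+1, i.e., dim_k Tor_3^R(R/J, k) = ℓ+1. In particular, (I_t)_{≥ s+1} defines a ring of type s+2. -/

import Mathlib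

open MvPolynomial Module

variable (k : Type) [Field k]

/-- degree-`n` piece of `k[x,y,z]` -/
noncomputable abbrev gpiece (n : ℕ) : Submodule k (MvPolynomial (Fin 3) k) :=
  MvPolynomial.homogeneousSubmodule (Fin 3) k n

/-- the irrelevant maximal ideal -/
noncomputable def Rplus : Ideal (MvPolynomial (Fin 3) k) :=
  Ideal.span (Set.range MvPolynomial.X)

/-- dimension of degree-`n` piece of an ideal -/
noncomputable def pdim (I : Ideal (MvPolynomial (Fin 3) k)) (n : ℕ) : ℕ :=
  Module.finrank k ↥(I.restrictScalars k ⊓ gpiece k n)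

/-- Hilbert function of `R/I` -/
noncomputable def hf (I : Ideal (MvPolynomial (Fin 3) k)) (n : ℕ) : ℕ :=
  Module.finrank k ↥(gpiece k n) - pdim k I n

/-- dimension of the degree-`n` piece of the socle of `R/I` -/
noncomputable def socdim (I : Ideal (MvPolynomial (Fin 3) k)) (n : ℕ) : ℕ :=
  hf k I n - hf k (Submodule.colon I (Rplus k)) n

/-- `R/I` is Artinian Gorenstein (grade 3) with socle degree `t` -/
def IsArtinianGorenstein (I : Ideal (MvPolynomial (Fin 3) k)) (t : ℕ) : Prop :=
  (∀ n, socdim k I n = if n = t then 1 else 0) ∧ (∀ n, t < n → hf k I n = 0)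

/-- upper bound for the Hilbert function coming from a socle of type `k(-s)^ℓ ⊕ k(-2s+1)` -/
def cobound (s ℓ n : ℕ) : ℕ :=
  (if n ≤ s then ℓ * Nat.choose (s - n + 2) 2 else 0) +
    (if n ≤ 2 * s - 1 then Nat.choose (2 * s - 1 - n + 2) 2 else 0)

/-- `I` defines a compressed ring with socle `k(-s)^ℓ ⊕ k(-2s+1)` -/
def IsCompressedWithSocle (I : Ideal (MvPolynomial (Fin 3) k)) (s ℓ : ℕ) : Prop :=
  (∀ n, hf k I n = min (Nat.choose (n + 2) 2) (cobound s ℓ n)) ∧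
    (∀ n, socdim k I n = if n = s then ℓ else if n = 2 * s - 1 then 1 else 0)

/-- Cohen–Macaulay type  = total dimension of the socle of `R/I` -/
noncomputable def typeOf (I : Ideal (MvPolynomial (Fin 3) k)) : ℕ :=
  Module.finrank k
    ↥((Submodule.torsionBySet (MvPolynomial (Fin 3) k) (MvPolynomial (Fin 3) k ⧸ I)
        (Rplus k : Set (MvPolynomial (Fin 3) k))).restrictScalars k)

/-- minimal number of generators `μ(I) = dim_k I/(R_+ I)` -/
noncomputable def nu (I : Ideal (MvPolynomial (Fin 3) k)) : ℕ :=
  Module.finrank k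
    (↥(I.restrictScalars k) ⧸
      ((Rplus k * I : Ideal (MvPolynomial (Fin 3) k)).restrictScalars k).comap
        (I.restrictScalars k).subtype)

/-- dim_k of `I'/I` for nested ideals -/
noncomputable def qdim (I I' : Ideal (MvPolynomial (Fin 3) k)) : ℕ :=
  Module.finrank k
    (↥(I'.restrictScalars k) ⧸
      (I.restrictScalars k).comap (I'.restrictScalars k).subtype)

section Aux
variable {k}

attribute [local instance] MvPolynomial.gradedAlgebra

lemma mem_Rplus_iff {p : MvPolynomial (Fin 3) k} :
    p ∈ Rplus k ↔ ∀ m ∈ p.support, m ≠ 0 := by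
  rw [Rplus, ← Set.image_univ, mem_ideal_span_X_image]
  constructor
  · intro h m hm hm0
    obtain ⟨i, -, hi⟩ := h m hm
    exact hi (by simp [hm0])
  · intro h m hm
    rcases Finsupp.ne_iff.1 (h m hm) with ⟨i, hi⟩
    exact ⟨i, trivial, by simpa using hi⟩

lemma isHomog_mem_Rplus {p : MvPolynomial (Fin 3) k} {n : ℕ}
    (hp : p.IsHomogeneous n) (hn : n ≠ 0) : p ∈ Rplus k := by
  rw [mem_Rplus_iff]
  intro m hm hm0
  have := hp (MvPolynomial.mem_support_iff.1 hm)
  subst hm0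
  simp at this
  exact hn this.symm

lemma sub_C_mem_Rplus (r : MvPolynomial (Fin 3) k) :
    r - C (constantCoeff r) ∈ Rplus k := by
  rw [mem_Rplus_iff]
  intro m hm hm0
  subst hm0
  simp [MvPolynomial.mem_support_iff, coeff_sub, coeff_C, constantCoeff_eq] at hm

lemma decompose_coe (p : MvPolynomial (Fin 3) k) (i : ℕ) :
    ((DirectSum.decompose (homogeneousSubmodule (Fin 3) k) p i : MvPolynomial (Fin 3) k)) =
      homogeneousComponent i p :=
  MvPolynomial.decomposition.decompose'_apply p i

lemma hc_mul {g : MvPolynomial (Fin 3) k} {dd : ℕ}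
    (hg : g ∈ homogeneousSubmodule (Fin 3) k dd) (r : MvPolynomial (Fin 3) k) (n : ℕ) :
    homogeneousComponent n (r * g) =
      if dd ≤ n then homogeneousComponent (n - dd) r * g else 0 := by
  split_ifs with h
  · rw [← decompose_coe, ← decompose_coe,
      DirectSum.coe_decompose_mul_of_right_mem_of_le (homogeneousSubmodule (Fin 3) k) hg h]
  · rw [← decompose_coe,
      DirectSum.coe_decompose_mul_of_right_mem_of_not_le (homogeneousSubmodule (Fin 3) k) hg h]

instance gpiece_fd (n : ℕ) : FiniteDimensional k (gpiece k n) := by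
  have hle : homogeneousSubmodule (Fin 3) k n ≤ restrictTotalDegree (Fin 3) k n := by
    intro p hp
    rw [mem_restrictTotalDegree]
    exact ((mem_homogeneousSubmodule n p).1 hp).totalDegree_le
  exact Submodule.finiteDimensional_of_le hle

lemma comp_span {ι : Type} [Fintype ι] (G : ι → MvPolynomial (Fin 3) k) (dd : ι → ℕ)
    (hG : ∀ i, G i ∈ homogeneousSubmodule (Fin 3) k (dd i)) {f : MvPolynomial (Fin 3) k}
    (hf : f ∈ Ideal.span (Set.range G)) (n : ℕ) :
    ∃ r : ι → MvPolynomial (Fin 3) k,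
      homogeneousComponent n f =
        ∑ i, if dd i ≤ n then homogeneousComponent (n - dd i) (r i) * G i else 0 := by
  obtain ⟨c, hc⟩ := Ideal.mem_span_range_iff_exists_fun.1 hf
  refine ⟨c, ?_⟩
  rw [← hc, map_sum]
  exact Finset.sum_congr rfl fun i _ => hc_mul (hG i) (c i) n

lemma le_colon_self (I : Ideal (MvPolynomial (Fin 3) k)) :
    I ≤ Submodule.colon I (Rplus k) := by
  intro x hx
  rw [Submodule.mem_colon]
  intro p _
  exact I.mul_mem_right p hx

lemma colon_piece_eq {I : Ideal (MvPolynomial (Fin 3) k)} {n : ℕ}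
    (h0 : socdim k I n = 0) :
    (Submodule.colon I (Rplus k)).restrictScalars k ⊓ gpiece k n
      = I.restrictScalars k ⊓ gpiece k n := by
  have hAB : (I.restrictScalars k ⊓ gpiece k n : Submodule k (MvPolynomial (Fin 3) k))
      ≤ (Submodule.colon I (Rplus k)).restrictScalars k ⊓ gpiece k n :=
    inf_le_inf_right _ fun x hx => le_colon_self I hx
  have hfinB : FiniteDimensional k
      ((Submodule.colon I (Rplus k)).restrictScalars k ⊓ gpiece k n :
        Submodule k (MvPolynomial (Fin 3) k)) :=
    Submodule.finiteDimensional_of_le inf_le_right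
  refine (Submodule.eq_of_le_of_finrank_le hAB ?_).symm
  unfold socdim hf pdim at h0
  have h1 := Submodule.finrank_mono (R := k)
    (inf_le_right : (Submodule.colon I (Rplus k)).restrictScalars k ⊓ gpiece k n ≤ gpiece k n)
  have h2 := Submodule.finrank_mono (R := k)
    (inf_le_right : I.restrictScalars k ⊓ gpiece k n ≤ gpiece k n)
  omega

lemma gpiece_le_of_hf_zero {I : Ideal (MvPolynomial (Fin 3) k)} {n : ℕ}
    (h : hf k I n = 0) :
    (gpiece k n : Submodule k (MvPolynomial (Fin 3) k)) ≤ I.restrictScalars k := by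
  have hle : (I.restrictScalars k ⊓ gpiece k n : Submodule k (MvPolynomial (Fin 3) k))
      ≤ gpiece k n := inf_le_right
  have haN := Submodule.finrank_mono (R := k) hle
  have hNa : finrank k ↥(gpiece k n) ≤ finrank k ↥(I.restrictScalars k ⊓ gpiece k n) := by
    unfold hf pdim at h; omega
  have heq := Submodule.eq_of_le_of_finrank_le hle hNa
  intro x hx
  rw [← heq] at hx
  exact hx.1

lemma finrank_comap_subtype {M : Type} [AddCommGroup M] [Module k M]
    (p q : Submodule k M) [FiniteDimensional k q] :
    finrank k (Submodule.comap q.subtype p) = finrank k (p ⊓ q : Submodule k M) := by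
  have heq : Submodule.comap q.subtype p = Submodule.comap q.subtype (p ⊓ q) := by
    ext x
    simp [Submodule.mem_comap, x.2]
  rw [heq]
  exact (Submodule.comapSubtypeEquivOfLe inf_le_right).finrank_eq

lemma finrank_quot_comap {M : Type} [AddCommGroup M] [Module k M]
    (p q : Submodule k M) [FiniteDimensional k q] :
    finrank k (q ⧸ Submodule.comap q.subtype p)
      = finrank k q - finrank k (p ⊓ q : Submodule k M) := by
  have h := Submodule.finrank_quotient_add_finrank (Submodule.comap q.subtype p)
  rw [finrank_comap_subtype] at h
  omega

lemma Rplus_mul_span_singleton (g : MvPolynomial (Fin 3) k) :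
    Rplus k * Ideal.span {g} = Ideal.span (Set.range (fun i => X i * g)) := by
  rw [Rplus, Ideal.span_mul_span]
  congr 1
  ext x
  simp only [Set.mem_iUnion, Set.mem_singleton_iff, Set.mem_range]
  constructor
  · rintro ⟨y, ⟨i, rfl⟩, t, rfl, rfl⟩
    exact ⟨i, rfl⟩
  · rintro ⟨i, rfl⟩
    exact ⟨X i, ⟨i, rfl⟩, g, rfl, rfl⟩

end Aux

section Master
variable {k : Type} [Field k]

attribute [local instance] MvPolynomial.gradedAlgebra

set_option maxHeartbeats 4000000 in
set_option synthInstance.maxHeartbeats 1000000 in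
lemma master (s b ℓ : ℕ) (hs : 3 ≤ s) (hℓ1 : 1 ≤ ℓ) (hℓ : ℓ ≤ s + 1)
    (It : Ideal (MvPolynomial (Fin 3) k))
    (hGor : IsArtinianGorenstein k It (2 * s - 1))
    (hcomp : IsCompressedWithSocle k It s 0)
    (φ : Fin (s + 1) → MvPolynomial (Fin 3) k) (ψ : Fin b → MvPolynomial (Fin 3) k)
    (hφ : ∀ i, (φ i).IsHomogeneous s) (hψ : ∀ i, (ψ i).IsHomogeneous (s + 1))
    (hspan : It = Ideal.span (Set.range φ ∪ Set.range ψ))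
    (hmin : nu k It = s + 1 + b) :
    typeOf k
        (Ideal.span ((φ '' {i : Fin (s + 1) | (i : ℕ) < s + 1 - ℓ}) ∪ Set.range ψ) ⊔
          ⨆ j : Fin (s + 1),
            if s + 1 - ℓ ≤ (j : ℕ) then Rplus k * Ideal.span {φ j} else ⊥) = ℓ + 1 := by
  set J : Ideal (MvPolynomial (Fin 3) k) :=
    Ideal.span ((φ '' {i : Fin (s + 1) | (i : ℕ) < s + 1 - ℓ}) ∪ Set.range ψ) ⊔
      ⨆ j : Fin (s + 1),
        if s + 1 - ℓ ≤ (j : ℕ) then Rplus k * Ideal.span {φ j} else ⊥ with hJdef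
  -- index types and generator families
  set G1 : Fin (s + 1) ⊕ Fin b → MvPolynomial (Fin 3) k := Sum.elim φ ψ with hG1def
  set d1 : Fin (s + 1) ⊕ Fin b → ℕ := Sum.elim (fun _ => s) (fun _ => s + 1) with hd1def
  have hG1 : ∀ i, G1 i ∈ homogeneousSubmodule (Fin 3) k (d1 i) := by
    rintro (i | i)
    · exact (mem_homogeneousSubmodule _ _).2 (hφ i)
    · exact (mem_homogeneousSubmodule _ _).2 (hψ i)
  have hItspan : It = Ideal.span (Set.range G1) := by
    rw [hspan, hG1def, Set.Sum.elim_range]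
  set G2 : (Fin (s + 1) ⊕ Fin b) ⊕ (Fin 3 × Fin (s + 1)) → MvPolynomial (Fin 3) k :=
    Sum.elim (Sum.elim (fun i => if (i : ℕ) < s + 1 - ℓ then φ i else 0) ψ)
      (fun p => if s + 1 - ℓ ≤ (p.2 : ℕ) then X p.1 * φ p.2 else 0) with hG2def
  set d2 : (Fin (s + 1) ⊕ Fin b) ⊕ (Fin 3 × Fin (s + 1)) → ℕ :=
    Sum.elim (Sum.elim (fun _ => s) (fun _ => s + 1)) (fun _ => s + 1) with hd2def
  have hG2 : ∀ i, G2 i ∈ homogeneousSubmodule (Fin 3) k (d2 i) := by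
    rintro ((i | i) | p)
    · simp only [hG2def, hd2def, Sum.elim_inl]
      split_ifs
      · exact (mem_homogeneousSubmodule _ _).2 (hφ i)
      · exact Submodule.zero_mem _
    · exact (mem_homogeneousSubmodule _ _).2 (hψ i)
    · simp only [hG2def, hd2def, Sum.elim_inr]
      split_ifs
      · exact (mem_homogeneousSubmodule _ _).2 (by simpa [add_comm] using (isHomogeneous_X k p.1).mul (hφ p.2))
      · exact Submodule.zero_mem _
  have hJspan : J = Ideal.span (Set.range G2) := by
    apply le_antisymm
    · rw [hJdef]
      apply sup_le
      · rw [Ideal.span_le]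
        rintro x (⟨i, hi, rfl⟩ | ⟨i, rfl⟩)
        · have : G2 (Sum.inl (Sum.inl i)) = φ i := if_pos hi
          exact this ▸ Ideal.subset_span ⟨Sum.inl (Sum.inl i), rfl⟩
        · exact Ideal.subset_span ⟨Sum.inl (Sum.inr i), rfl⟩
      · refine iSup_le fun j => ?_
        split_ifs with hj
        · rw [Rplus_mul_span_singleton, Ideal.span_le]
          rintro x ⟨i, rfl⟩
          have h2 : G2 (Sum.inr (i, j)) = X i * φ j := if_pos hj
          show X i * φ j ∈ Ideal.span (Set.range G2)
          exact h2 ▸ Ideal.subset_span ⟨Sum.inr (i, j), rfl⟩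
        · exact bot_le
    · rw [Ideal.span_le]
      rintro x ⟨(( i | i) | p), rfl⟩
      · simp only [hG2def, Sum.elim_inl]
        split_ifs with hi
        · exact le_sup_left (α := Ideal (MvPolynomial (Fin 3) k))
            (Ideal.subset_span (Or.inl ⟨i, hi, rfl⟩))
        · exact J.zero_mem
      · exact le_sup_left (α := Ideal (MvPolynomial (Fin 3) k))
          (Ideal.subset_span (Or.inr ⟨i, rfl⟩))
      · simp only [hG2def, Sum.elim_inr]
        split_ifs with hp
        · refine (le_sup_right (α := Ideal (MvPolynomial (Fin 3) k)) : _ ≤ J) ?_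
          refine (le_iSup _ p.2 : _ ≤ ⨆ j : Fin (s+1), if s + 1 - ℓ ≤ (j : ℕ) then Rplus k * Ideal.span {φ j} else ⊥) ?_
          rw [if_pos hp]
          exact Ideal.mul_mem_mul (Ideal.subset_span ⟨p.1, rfl⟩)
            (Ideal.subset_span rfl)
        · exact J.zero_mem

  -- membership helpers for J
  have hXRplus : ∀ i : Fin 3, (X i : MvPolynomial (Fin 3) k) ∈ Rplus k := by
    intro i; rw [Rplus]; exact Ideal.subset_span ⟨i, rfl⟩
  have hφJ : ∀ i : Fin (s + 1), (i : ℕ) < s + 1 - ℓ → φ i ∈ J := by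
    intro i hi
    have h2 : G2 (Sum.inl (Sum.inl i)) = φ i := if_pos hi
    rw [hJspan]
    exact h2 ▸ Ideal.subset_span ⟨Sum.inl (Sum.inl i), rfl⟩
  have hψJ : ∀ i : Fin b, ψ i ∈ J := by
    intro i
    rw [hJspan]
    exact Ideal.subset_span ⟨Sum.inl (Sum.inr i), rfl⟩
  have hRφJ : ∀ j : Fin (s + 1), ¬((j : ℕ) < s + 1 - ℓ) →
      Rplus k * Ideal.span {φ j} ≤ J := by
    intro j hj
    rw [Rplus_mul_span_singleton, hJspan, Ideal.span_le]
    rintro x ⟨i, rfl⟩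
    have h2 : G2 (Sum.inr (i, j)) = X i * φ j := if_pos (not_lt.1 hj)
    show X i * φ j ∈ Ideal.span (Set.range G2)
    exact h2 ▸ Ideal.subset_span ⟨Sum.inr (i, j), rfl⟩
  have hJIt : J ≤ It := by
    rw [hJspan, hItspan, Ideal.span_le]
    rintro x ⟨((i | i) | p), rfl⟩
    · simp only [hG2def, Sum.elim_inl]
      split_ifs
      · exact Ideal.subset_span ⟨Sum.inl i, rfl⟩
      · exact Submodule.zero_mem _
    · exact Ideal.subset_span ⟨Sum.inr i, rfl⟩
    · simp only [hG2def, Sum.elim_inr]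
      split_ifs
      · exact Ideal.mul_mem_left _ _ (Ideal.subset_span ⟨Sum.inl p.2, rfl⟩)
      · exact Submodule.zero_mem _
  -- homogeneous component lemmas for It and J
  have M2 : ∀ f ∈ It, ∀ n, n < s → homogeneousComponent n f = 0 := by
    intro f hf n hn
    obtain ⟨r, hr⟩ := comp_span G1 d1 hG1 (hItspan ▸ hf) n
    rw [hr]
    refine Finset.sum_eq_zero ?_
    rintro (i | i) -
    · simp only [hd1def, Sum.elim_inl]
      rw [if_neg (by omega)]
    · simp only [hd1def, Sum.elim_inr]
      rw [if_neg (by omega)]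
  have M3 : ∀ f ∈ It, homogeneousComponent s f ∈ Submodule.span k (Set.range φ) := by
    intro f hf
    obtain ⟨r, hr⟩ := comp_span G1 d1 hG1 (hItspan ▸ hf) s
    rw [hr]
    refine Submodule.sum_mem _ ?_
    rintro (i | i) -
    · simp only [hd1def, hG1def, Sum.elim_inl, if_pos le_rfl, Nat.sub_self,
        homogeneousComponent_zero]
      rw [MvPolynomial.C_mul']
      exact Submodule.smul_mem _ _ (Submodule.subset_span ⟨i, rfl⟩)
    · simp only [hd1def, Sum.elim_inr]
      rw [if_neg (by omega)]
      exact Submodule.zero_mem _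
  have M4 : ∀ f ∈ It, ∀ n, s + 1 ≤ n → homogeneousComponent n f ∈ J := by
    intro f hf n hn
    obtain ⟨r, hr⟩ := comp_span G1 d1 hG1 (hItspan ▸ hf) n
    rw [hr]
    refine Ideal.sum_mem _ ?_
    rintro (i | i) -
    · simp only [hd1def, hG1def, Sum.elim_inl]
      rw [if_pos (by omega)]
      by_cases hi : (i : ℕ) < s + 1 - ℓ
      · exact J.mul_mem_left _ (hφJ i hi)
      · refine hRφJ i hi ?_
        refine Ideal.mul_mem_mul ?_ (Ideal.subset_span rfl)
        exact isHomog_mem_Rplus (homogeneousComponent_isHomogeneous _ _) (by omega)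
    · simp only [hd1def, hG1def, Sum.elim_inr]
      rw [if_pos (show s + 1 ≤ n by omega)]
      exact J.mul_mem_left _ (hψJ i)
  have M5 : ∀ f ∈ J, homogeneousComponent s f ∈
      Submodule.span k (φ '' {i : Fin (s + 1) | (i : ℕ) < s + 1 - ℓ}) := by
    intro f hf
    obtain ⟨r, hr⟩ := comp_span G2 d2 hG2 (hJspan ▸ hf) s
    rw [hr]
    refine Submodule.sum_mem _ ?_
    rintro ((i | i) | p) -
    · simp only [hd2def, hG2def, Sum.elim_inl, if_pos le_rfl, Nat.sub_self,
        homogeneousComponent_zero]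
      split_ifs with hi
      · rw [MvPolynomial.C_mul']
        exact Submodule.smul_mem _ _ (Submodule.subset_span ⟨i, hi, rfl⟩)
      · simp
    · simp only [hd2def, Sum.elim_inl, Sum.elim_inr]
      rw [if_neg (by omega)]
      exact Submodule.zero_mem _
    · simp only [hd2def, Sum.elim_inr]
      rw [if_neg (by omega)]
      exact Submodule.zero_mem _
  -- J is homogeneous
  have hJhom : ∀ p ∈ J, ∀ n, homogeneousComponent n p ∈ J := by
    have h := Ideal.homogeneous_span (homogeneousSubmodule (Fin 3) k) (Set.range G2)
      (by rintro x ⟨i, rfl⟩; exact ⟨d2 i, hG2 i⟩)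
    intro p hp n
    have h2 := h n (hJspan ▸ hp)
    rw [decompose_coe] at h2
    rw [hJspan]
    exact h2
  -- colon facts
  have hXK : ∀ f, (∀ i, X i * f ∈ J) → f ∈ Submodule.colon J (Rplus k) := by
    intro f hfX
    rw [Submodule.mem_colon]
    intro p hp
    rw [Rplus] at hp
    obtain ⟨c, rfl⟩ := Ideal.mem_span_range_iff_exists_fun.1 hp
    rw [smul_eq_mul, Finset.mul_sum]
    refine Ideal.sum_mem _ fun i _ => ?_
    have heq : f * (c i * X i) = c i * (X i * f) := by ring
    rw [heq]
    exact J.mul_mem_left _ (hfX i)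
  have hKX : ∀ f ∈ Submodule.colon J (Rplus k), ∀ i, X i * f ∈ J := by
    intro f hf i
    have h2 := Submodule.mem_colon.1 hf (X i) (hXRplus i)
    rwa [smul_eq_mul, mul_comm] at h2
  have hKcomp : ∀ f ∈ Submodule.colon J (Rplus k), ∀ n,
      homogeneousComponent n f ∈ Submodule.colon J (Rplus k) := by
    intro f hf n
    refine hXK _ fun i => ?_
    have h1 : homogeneousComponent (n + 1) (f * X i) = homogeneousComponent n f * X i := by
      rw [hc_mul ((mem_homogeneousSubmodule _ _).2 (isHomogeneous_X k i)) f (n + 1),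
        if_pos (by omega), Nat.add_sub_cancel]
    rw [mul_comm, ← h1, mul_comm f (X i)]
    exact hJhom _ (hKX f hf i) (n + 1)
  have hKIt : Submodule.colon J (Rplus k) ≤ Submodule.colon It (Rplus k) := by
    intro x hx
    rw [Submodule.mem_colon] at hx ⊢
    exact fun p hp => hJIt (hx p hp)
  -- piece identifications
  have hsoc0 : ∀ n, n ≠ 2 * s - 1 → socdim k It n = 0 := by
    intro n hn
    rw [hcomp.2 n]
    rcases eq_or_ne n s with h | h
    · simp [h]
    · rw [if_neg h, if_neg hn]
  have hcolonItpiece : ∀ n, n ≠ 2 * s - 1 →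
      (Submodule.colon It (Rplus k)).restrictScalars k ⊓ gpiece k n
        = It.restrictScalars k ⊓ gpiece k n :=
    fun n hn => colon_piece_eq (hsoc0 n hn)
  have hIthigh : ∀ n, s + 1 ≤ n → ∀ f ∈ It, f ∈ gpiece k n → f ∈ J := by
    intro n hn f hf hg
    have heq : homogeneousComponent n f = f := by
      rw [homogeneousComponent_of_mem hg, if_pos rfl]
    rw [← heq]
    exact M4 f hf n hn
  have hItlow : ∀ n, n < s → ∀ f ∈ It, f ∈ gpiece k n → f = 0 := by
    intro n hn f hf hg
    have heq : homogeneousComponent n f = f := by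
      rw [homogeneousComponent_of_mem hg, if_pos rfl]
    rw [← heq]
    exact M2 f hf n hn
  have hgp2s : ∀ n, 2 * s ≤ n →
      (gpiece k n : Submodule k (MvPolynomial (Fin 3) k)) ≤ It.restrictScalars k :=
    fun n hn => gpiece_le_of_hf_zero (hGor.2 n (by omega))
  have hKJ : ∀ f ∈ Submodule.colon J (Rplus k), ∀ n, n ≠ s → n ≠ 2 * s - 1 →
      homogeneousComponent n f ∈ J := by
    intro f hf n hns hn2
    have hK2 : homogeneousComponent n f ∈ Submodule.colon It (Rplus k) :=
      hKIt (hKcomp f hf n)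
    have hgp : homogeneousComponent n f ∈ gpiece k n := homogeneousComponent_mem n f
    have hmem : homogeneousComponent n f ∈ It.restrictScalars k ⊓ gpiece k n := by
      rw [← hcolonItpiece n hn2]
      exact ⟨hK2, hgp⟩
    rcases lt_or_ge n s with h | h
    · rw [hItlow n h _ hmem.1 hgp]
      exact J.zero_mem
    · exact hIthigh n (by omega) _ hmem.1 hgp
  have hdecompJ : ∀ f ∈ Submodule.colon J (Rplus k),
      homogeneousComponent s f ∈ J → homogeneousComponent (2 * s - 1) f ∈ J → f ∈ J := by
    intro f hf h1 h2
    rw [← sum_homogeneousComponent f]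
    refine Ideal.sum_mem _ fun n _ => ?_
    by_cases hn1 : n = s
    · subst hn1; exact h1
    by_cases hn2 : n = 2 * s - 1
    · subst hn2; exact h2
    exact hKJ f hf n hn1 hn2

  -- linear independence of φ from minimality
  have hφind : LinearIndependent k φ := by
    set N0 : Submodule k (MvPolynomial (Fin 3) k) :=
      ((Rplus k * It : Ideal (MvPolynomial (Fin 3) k)).restrictScalars k) with hN0
    have hG1mem : ∀ i, G1 i ∈ It.restrictScalars k := by
      intro i
      show G1 i ∈ It
      rw [hItspan]
      exact Ideal.subset_span ⟨i, rfl⟩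
    set w : Fin (s + 1) ⊕ Fin b → ↥(It.restrictScalars k) :=
      fun i => ⟨G1 i, hG1mem i⟩ with hwdef
    set π := (N0.comap (It.restrictScalars k).subtype).mkQ with hπ
    have hspanv : ⊤ ≤ Submodule.span k (Set.range (π ∘ w)) := by
      rintro x -
      obtain ⟨y, rfl⟩ := Submodule.mkQ_surjective _ x
      have hyIt : (y : MvPolynomial (Fin 3) k) ∈ Ideal.span (Set.range G1) :=
        hItspan ▸ y.2
      obtain ⟨c, hc⟩ := Ideal.mem_span_range_iff_exists_fun.1 hyIt
      have key : π y = ∑ i, constantCoeff (c i) • (π ∘ w) i := by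
        have h1 : ∑ i, constantCoeff (c i) • (π ∘ w) i
            = π (∑ i, constantCoeff (c i) • w i) := by
          rw [map_sum]
          exact Finset.sum_congr rfl fun i _ => (map_smul π _ _).symm
        rw [h1]
        symm
        rw [hπ, Submodule.mkQ_apply, Submodule.mkQ_apply, Submodule.Quotient.eq,
          Submodule.mem_comap]
        have hval : (((∑ i, constantCoeff (c i) • w i) - y :
            ↥(It.restrictScalars k)) : MvPolynomial (Fin 3) k)
            = ∑ i, C (constantCoeff (c i)) * G1 i - (y : MvPolynomial (Fin 3) k) := by
          push_cast
          simp [MvPolynomial.C_mul']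
          rfl
        show (((∑ i, constantCoeff (c i) • w i) - y : ↥(It.restrictScalars k)) :
          MvPolynomial (Fin 3) k) ∈ N0
        rw [hval, ← hc]
        have : ∑ i, C (constantCoeff (c i)) * G1 i - ∑ i, c i * G1 i
            = -∑ i, (c i - C (constantCoeff (c i))) * G1 i := by
          rw [← Finset.sum_sub_distrib]
          rw [← Finset.sum_neg_distrib]
          refine Finset.sum_congr rfl fun i _ => ?_
          ring
        rw [this]
        refine Submodule.neg_mem _ ?_
        refine Submodule.sum_mem _ fun i _ => ?_
        show (c i - C (constantCoeff (c i))) * G1 i ∈ Rplus k * It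
        exact Ideal.mul_mem_mul (sub_C_mem_Rplus (c i)) (hG1mem i)
      rw [key]
      exact Submodule.sum_mem _ fun i _ =>
        Submodule.smul_mem _ _ (Submodule.subset_span ⟨i, rfl⟩)
    have hcard : Fintype.card (Fin (s + 1) ⊕ Fin b)
        = finrank k (↥(It.restrictScalars k) ⧸ (N0.comap (It.restrictScalars k).subtype)) := by
      have : finrank k (↥(It.restrictScalars k) ⧸ (N0.comap (It.restrictScalars k).subtype))
          = nu k It := rfl
      rw [this, hmin, Fintype.card_sum, Fintype.card_fin, Fintype.card_fin]
    have hvind := linearIndependent_of_top_le_span_of_card_eq_finrank hspanv hcard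
    have hwind : LinearIndependent k w := hvind.of_comp π
    have hwinl : LinearIndependent k (fun i : Fin (s + 1) => w (Sum.inl i)) :=
      hwind.comp Sum.inl Sum.inl_injective
    have hmap := hwinl.map' (It.restrictScalars k).subtype (Submodule.ker_subtype _)
    exact hmap

  -- the degree-s piece of It
  set W : Submodule k (MvPolynomial (Fin 3) k) := It.restrictScalars k ⊓ gpiece k s with hWdef
  haveI instWfd : FiniteDimensional k W := Submodule.finiteDimensional_of_le inf_le_right
  have hWspan : W = Submodule.span k (Set.range φ) := by
    apply le_antisymm
    · rintro f ⟨hf1, hf2⟩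
      have heq : homogeneousComponent s f = f := by
        rw [homogeneousComponent_of_mem hf2, if_pos rfl]
      rw [← heq]
      exact M3 f hf1
    · rw [Submodule.span_le]
      rintro x ⟨i, rfl⟩
      refine ⟨?_, (mem_homogeneousSubmodule _ _).2 (hφ i)⟩
      show φ i ∈ It
      rw [hItspan]
      exact Ideal.subset_span ⟨Sum.inl i, rfl⟩
  have hfinW : finrank k W = s + 1 := by
    rw [hWspan, finrank_span_eq_card hφind, Fintype.card_fin]
  set N : Submodule k (MvPolynomial (Fin 3) k) := J.restrictScalars k with hNdef
  have hNW : N ⊓ W = Submodule.span k (φ '' {i : Fin (s + 1) | (i : ℕ) < s + 1 - ℓ}) := by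
    apply le_antisymm
    · rintro f ⟨hfN, hfIt, hfg⟩
      have heq : homogeneousComponent s f = f := by
        rw [homogeneousComponent_of_mem hfg, if_pos rfl]
      rw [← heq]
      exact M5 f hfN
    · rw [Submodule.span_le]
      rintro x ⟨i, hi, rfl⟩
      exact ⟨hφJ i hi, ⟨by rw [hItspan]; exact Ideal.subset_span ⟨Sum.inl i, rfl⟩,
        (mem_homogeneousSubmodule _ _).2 (hφ i)⟩⟩
  have hfinNW : finrank k
      (Submodule.span k (φ '' {i : Fin (s + 1) | (i : ℕ) < s + 1 - ℓ})) = s + 1 - ℓ := by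
    have himg : φ '' {i : Fin (s + 1) | (i : ℕ) < s + 1 - ℓ}
        = Set.range (fun x : {i : Fin (s + 1) // (i : ℕ) < s + 1 - ℓ} => φ x.1) := by
      rw [Set.image_eq_range]
      rfl
    have hind2 : LinearIndependent k
        (fun x : {i : Fin (s + 1) // (i : ℕ) < s + 1 - ℓ} => φ x.1) :=
      hφind.comp Subtype.val Subtype.val_injective
    rw [himg, finrank_span_eq_card hind2]
    have e : {i : Fin (s + 1) // (i : ℕ) < s + 1 - ℓ} ≃ Fin (s + 1 - ℓ) :=
      { toFun := fun x => ⟨(x.1 : ℕ), x.2⟩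
        invFun := fun y => ⟨⟨(y : ℕ), by omega⟩, y.2⟩
        left_inv := fun x => Subtype.ext (Fin.ext rfl)
        right_inv := fun y => rfl }
    rw [Fintype.card_congr e, Fintype.card_fin]
  set V : Submodule k (MvPolynomial (Fin 3) k) := gpiece k (2 * s - 1) with hVdef
  have hNV : N ⊓ V = It.restrictScalars k ⊓ V := by
    apply le_antisymm
    · exact inf_le_inf_right _ fun x hx => hJIt hx
    · rintro f ⟨hf1, hf2⟩
      exact ⟨hIthigh (2 * s - 1) (by omega) f hf1 hf2, hf2⟩
  have hhf1 : hf k It (2 * s - 1) = 1 := by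
    rw [hcomp.1]
    have h1 : cobound s 0 (2 * s - 1) = 1 := by
      unfold cobound
      rw [if_neg (by omega), if_pos le_rfl]
      norm_num
    rw [h1]
    have h2 := Nat.choose_pos (show 2 ≤ 2 * s - 1 + 2 by omega)
    omega
  have hfinItV : finrank k (It.restrictScalars k ⊓ V : Submodule k (MvPolynomial (Fin 3) k)) + 1
      = finrank k V := by
    unfold hf pdim at hhf1
    have h2 := Submodule.finrank_mono (R := k)
      (inf_le_right : It.restrictScalars k ⊓ gpiece k (2 * s - 1) ≤ gpiece k (2 * s - 1))
    rw [hVdef]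
    omega
  set B1 := Submodule.comap W.subtype N with hB1
  set B2 := Submodule.comap V.subtype N with hB2
  have hfinQ1 : finrank k (W ⧸ B1) = ℓ := by
    rw [hB1, finrank_quot_comap N W, hfinW, hNW, hfinNW]
    omega
  have hfinQ2 : finrank k (V ⧸ B2) = 1 := by
    rw [hB2, finrank_quot_comap N V, hNV]
    omega

  -- set up the comparison maps
  set K' : Submodule k (MvPolynomial (Fin 3) k) :=
    (Submodule.colon J (Rplus k)).restrictScalars k with hK'def
  set g0 : MvPolynomial (Fin 3) k →ₗ[k] (MvPolynomial (Fin 3) k ⧸ J) :=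
    LinearMap.restrictScalars k
      (Submodule.mkQ (J : Submodule (MvPolynomial (Fin 3) k) (MvPolynomial (Fin 3) k)))
    with hg0
  set F1 : K' →ₗ[k] (MvPolynomial (Fin 3) k ⧸ J) := g0.comp K'.subtype with hF1
  have hker1 : LinearMap.ker F1 = Submodule.comap K'.subtype N := by
    ext x
    rw [LinearMap.mem_ker, Submodule.mem_comap]
    show Submodule.Quotient.mk (x : MvPolynomial (Fin 3) k) = 0 ↔ _
    rw [Submodule.Quotient.mk_eq_zero]
    exact Iff.rfl
  have hrange1 : LinearMap.range F1
      = (Submodule.torsionBySet (MvPolynomial (Fin 3) k) (MvPolynomial (Fin 3) k ⧸ J)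
          (Rplus k : Set (MvPolynomial (Fin 3) k))).restrictScalars k := by
    ext y
    rw [Submodule.restrictScalars_mem, Submodule.mem_torsionBySet_iff]
    constructor
    · rintro ⟨x, rfl⟩
      rintro ⟨a, ha⟩
      have hax : a * (x : MvPolynomial (Fin 3) k) ∈ J := by
        have h2 := Submodule.mem_colon.1 x.2 a ha
        rwa [smul_eq_mul, mul_comm] at h2
      show a • Submodule.Quotient.mk ((x : MvPolynomial (Fin 3) k)) = 0
      rw [← Submodule.Quotient.mk_smul, Submodule.Quotient.mk_eq_zero]
      rwa [smul_eq_mul]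
    · intro hy
      obtain ⟨f, rfl⟩ := Submodule.Quotient.mk_surjective
        (J : Submodule (MvPolynomial (Fin 3) k) (MvPolynomial (Fin 3) k)) y
      have hfK : f ∈ Submodule.colon J (Rplus k) := by
        rw [Submodule.mem_colon]
        intro p hp
        have h2 := hy ⟨p, hp⟩
        rw [← Submodule.Quotient.mk_smul, Submodule.Quotient.mk_eq_zero] at h2
        rwa [smul_eq_mul, mul_comm]
        -- h2 : p • f ∈ J, goal f • p ∈ J
      exact ⟨⟨f, hfK⟩, rfl⟩
  have hc1mem : ∀ x : ↥K', homogeneousComponent s (x : MvPolynomial (Fin 3) k) ∈ W := by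
    intro x
    have h1 : homogeneousComponent s (x : MvPolynomial (Fin 3) k)
        ∈ Submodule.colon It (Rplus k) := hKIt (hKcomp _ x.2 s)
    have h2 : homogeneousComponent s (x : MvPolynomial (Fin 3) k) ∈ gpiece k s :=
      homogeneousComponent_mem s _
    have h3 := hcolonItpiece s (by omega)
    rw [hWdef, ← h3]
    exact ⟨h1, h2⟩
  have hc2mem : ∀ x : ↥K',
      homogeneousComponent (2 * s - 1) (x : MvPolynomial (Fin 3) k) ∈ V :=
    fun x => homogeneousComponent_mem _ _
  set c1 : ↥K' →ₗ[k] ↥W :=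
    LinearMap.codRestrict W ((homogeneousComponent s).comp K'.subtype) hc1mem with hc1
  set c2 : ↥K' →ₗ[k] ↥V :=
    LinearMap.codRestrict V ((homogeneousComponent (2 * s - 1)).comp K'.subtype) hc2mem
    with hc2
  set F2 : ↥K' →ₗ[k] (↥W ⧸ B1) × (↥V ⧸ B2) :=
    (B1.mkQ.comp c1).prod (B2.mkQ.comp c2) with hF2
  have hF2apply : ∀ x : ↥K', F2 x = (B1.mkQ (c1 x), B2.mkQ (c2 x)) := fun x => rfl
  have hker2 : LinearMap.ker F2 = Submodule.comap K'.subtype N := by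
    ext x
    rw [LinearMap.mem_ker, Submodule.mem_comap, hF2apply, Prod.mk_eq_zero,
      Submodule.mkQ_apply, Submodule.mkQ_apply, Submodule.Quotient.mk_eq_zero,
      Submodule.Quotient.mk_eq_zero, hB1, hB2, Submodule.mem_comap, Submodule.mem_comap]
    constructor
    · rintro ⟨h1, h2⟩
      exact hdecompJ _ x.2 h1 h2
    · intro hx
      have hxJ : (x : MvPolynomial (Fin 3) k) ∈ J := hx
      exact ⟨hJhom _ hxJ s, hJhom _ hxJ (2 * s - 1)⟩
  have hsurj2 : Function.Surjective F2 := by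
    rintro ⟨q1, q2⟩
    obtain ⟨y1, rfl⟩ := Submodule.mkQ_surjective B1 q1
    obtain ⟨y2, rfl⟩ := Submodule.mkQ_surjective B2 q2
    have hy1It : (y1 : MvPolynomial (Fin 3) k) ∈ It := (Submodule.mem_inf.1 y1.2).1
    have hy1g : (y1 : MvPolynomial (Fin 3) k) ∈ gpiece k s := (Submodule.mem_inf.1 y1.2).2
    have hy2g : (y2 : MvPolynomial (Fin 3) k) ∈ gpiece k (2 * s - 1) := y2.2
    have hfK : (y1 : MvPolynomial (Fin 3) k) + (y2 : MvPolynomial (Fin 3) k)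
        ∈ Submodule.colon J (Rplus k) := by
      refine hXK _ fun i => ?_
      rw [mul_add]
      have hX : (X i : MvPolynomial (Fin 3) k) ∈ homogeneousSubmodule (Fin 3) k 1 :=
        (mem_homogeneousSubmodule _ _).2 (isHomogeneous_X k i)
      refine J.add_mem ?_ ?_
      · have hg1 : X i * (y1 : MvPolynomial (Fin 3) k) ∈ gpiece k (s + 1) := by
          have h := SetLike.mul_mem_graded hX hy1g
          rwa [show 1 + s = s + 1 by omega] at h
        exact hIthigh (s + 1) le_rfl _ (It.mul_mem_left _ hy1It) hg1
      · have hg2 : X i * (y2 : MvPolynomial (Fin 3) k) ∈ gpiece k (2 * s) := by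
          have h := SetLike.mul_mem_graded hX hy2g
          rwa [show 1 + (2 * s - 1) = 2 * s by omega] at h
        exact hIthigh (2 * s) (by omega) _ (hgp2s (2 * s) le_rfl hg2) hg2
    refine ⟨⟨(y1 : MvPolynomial (Fin 3) k) + (y2 : MvPolynomial (Fin 3) k), hfK⟩, ?_⟩
    have hcs : homogeneousComponent s
        ((y1 : MvPolynomial (Fin 3) k) + (y2 : MvPolynomial (Fin 3) k))
        = (y1 : MvPolynomial (Fin 3) k) := by
      rw [map_add, homogeneousComponent_of_mem hy1g, if_pos rfl,
        homogeneousComponent_of_mem hy2g, if_neg (by omega), add_zero]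
    have hc2s : homogeneousComponent (2 * s - 1)
        ((y1 : MvPolynomial (Fin 3) k) + (y2 : MvPolynomial (Fin 3) k))
        = (y2 : MvPolynomial (Fin 3) k) := by
      rw [map_add, homogeneousComponent_of_mem hy1g, if_neg (by omega),
        homogeneousComponent_of_mem hy2g, if_pos rfl, zero_add]
    rw [hF2apply]
    have e1 : c1 ⟨(y1 : MvPolynomial (Fin 3) k) + (y2 : MvPolynomial (Fin 3) k), hfK⟩
        = y1 := Subtype.ext hcs
    have e2 : c2 ⟨(y1 : MvPolynomial (Fin 3) k) + (y2 : MvPolynomial (Fin 3) k), hfK⟩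
        = y2 := Subtype.ext hc2s
    rw [e1, e2]
  -- assemble
  have etors :
      ((Submodule.torsionBySet (MvPolynomial (Fin 3) k) (MvPolynomial (Fin 3) k ⧸ J)
          (Rplus k : Set (MvPolynomial (Fin 3) k))).restrictScalars k)
        ≃ₗ[k] (↥W ⧸ B1) × (↥V ⧸ B2) :=
    ((LinearEquiv.ofEq _ _ hrange1.symm).trans
      ((F1.quotKerEquivRange).symm.trans (Submodule.quotEquivOfEq _ _ hker1))).trans
      ((Submodule.quotEquivOfEq _ _ hker2.symm).trans
        (F2.quotKerEquivOfSurjective hsurj2))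
  have htype : typeOf k J = finrank k ((↥W ⧸ B1) × (↥V ⧸ B2)) := etors.finrank_eq
  rw [htype, finrank_prod, hfinQ1, hfinQ2]

end Master

/-- Let `I_t ⊆ k[x,y,z]` be a grade 3 homogeneous compressed Gorenstein
ideal of socle degree `2s-1` (`s ≥ 3`), minimally generated by `φ_1,…,φ_{s+1}` of degree
`s` and `ψ_1,…,ψ_b` of degree `s+1`.  For any `1 ≤ ℓ ≤ s+1`, the trimmed ideal
`J = (φ_1,…,φ_{s+1-ℓ}, ψ_1,…,ψ_b) + R_+φ_{s+2-ℓ} + ⋯ + R_+φ_{s+1}` defines a ring of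
Cohen–Macaulay type `ℓ+1`; in particular `(I_t)_{≥ s+1}` defines a ring of type `s+2`. -/
theorem type_of_trimmed_gorenstein (k : Type) [Field k] (s b : ℕ) (hs : 3 ≤ s)
    (hb : b < s + 1) (It : Ideal (MvPolynomial (Fin 3) k))
    (hGor : IsArtinianGorenstein k It (2 * s - 1))
    (hcomp : IsCompressedWithSocle k It s 0)
    (φ : Fin (s + 1) → MvPolynomial (Fin 3) k) (ψ : Fin b → MvPolynomial (Fin 3) k)
    (hφ : ∀ i, (φ i).IsHomogeneous s) (hψ : ∀ i, (ψ i).IsHomogeneous (s + 1))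
    (hspan : It = Ideal.span (Set.range φ ∪ Set.range ψ))
    (hmin : nu k It = s + 1 + b) :
    (∀ ℓ : ℕ, 1 ≤ ℓ → ℓ ≤ s + 1 →
      typeOf k
        (Ideal.span ((φ '' {i : Fin (s + 1) | (i : ℕ) < s + 1 - ℓ}) ∪ Set.range ψ) ⊔
          ⨆ j : Fin (s + 1),
            if s + 1 - ℓ ≤ (j : ℕ) then Rplus k * Ideal.span {φ j} else ⊥) = ℓ + 1) ∧
    typeOf k
      (Ideal.span (Set.range ψ) ⊔ ⨆ j : Fin (s + 1), Rplus k * Ideal.span {φ j}) =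
        s + 2 := by
  constructor
  · intro ℓ h1 h2
    exact master s b ℓ hs h1 h2 It hGor hcomp φ ψ hφ hψ hspan hmin
  · have h := master s b (s + 1) hs (by omega) le_rfl It hGor hcomp φ ψ hφ hψ hspan hmin
    have e1 : φ '' {i : Fin (s + 1) | (i : ℕ) < s + 1 - (s + 1)} ∪ Set.range ψ
        = Set.range ψ := by
      rw [Nat.sub_self]
      simp
    have e2 : (⨆ j : Fin (s + 1),
          if s + 1 - (s + 1) ≤ (j : ℕ) then Rplus k * Ideal.span {φ j} else ⊥)
        = ⨆ j : Fin (s + 1), Rplus k * Ideal.span {φ j} := by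
      refine iSup_congr fun j => ?_
      rw [if_pos (by omega)]
    rw [e1, e2] at h
    rw [h]
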